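/- In the quantum Hamilton algebra QHa(N), the element f := T² + RL − AM of U(QHa(N)) is a central element (a Casimir operator) of U(QHa(N)). -/

import Mathlib

open UniversalEnvelopingAlgebra

/-- Kronecker delta with values in a field `k`. -/
def kdelta (k : Type*) [Field k] {N : ℕ} (a b : Fin N) : k := if a = b then 1 else 0

attribute [local instance 100] LieRing.ofAssociativeRing

/-- In the quantum Hamilton algebra `QHa(N)`, the element `T² + RL − AM` of `U(QHa(N))`
is a central element (a Casimir operator). -/
theorem QHa_casimir_central
    (k : Type*) [Field k] (g : Type*) [LieRing g] [LieAlgebra k g] (N : ℕ)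
    (J : Fin N → Fin N → g) (G F Q P : Fin N → g) (R E T L A M : g)
    (hJa : ∀ i j, J i j = -J j i)
    (hJJ : ∀ i j l m, ⁅J i j, J l m⁆ =
      kdelta k i m • J j l + kdelta k j l • J i m - kdelta k j m • J i l - kdelta k i l • J j m)
    (hJG : ∀ i j l, ⁅J i j, G l⁆ = -(kdelta k i l • G j) + kdelta k j l • G i)
    (hJF : ∀ i j l, ⁅J i j, F l⁆ = -(kdelta k i l • F j) + kdelta k j l • F i)
    (hJQ : ∀ i j l, ⁅J i j, Q l⁆ = -(kdelta k i l • Q j) + kdelta k j l • Q i)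
    (hJP : ∀ i j l, ⁅J i j, P l⁆ = -(kdelta k i l • P j) + kdelta k j l • P i)
    (hGF : ∀ i j, ⁅G i, F j⁆ = kdelta k i j • R)
    (hGQ : ∀ i j, ⁅G i, Q j⁆ = kdelta k i j • T)
    (hFP : ∀ i j, ⁅F i, P j⁆ = kdelta k i j • T)
    (hPQ : ∀ i j, ⁅P i, Q j⁆ = kdelta k i j • L)
    (hGP : ∀ i j, ⁅G i, P j⁆ = kdelta k i j • M)
    (hFQ : ∀ i j, ⁅F i, Q j⁆ = kdelta k i j • A)
    (hEG : ∀ i, ⁅E, G i⁆ = -P i) (hEF : ∀ i, ⁅E, F i⁆ = Q i)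
    (hET : ⁅E, T⁆ = -L) (hER : ⁅E, R⁆ = (2 : k) • T)
    (hLc : ∀ x : g, ⁅x, L⁆ = 0) (hAc : ∀ x : g, ⁅x, A⁆ = 0) (hMc : ∀ x : g, ⁅x, M⁆ = 0)
    (hGG : ∀ i j, ⁅G i, G j⁆ = 0) (hFF : ∀ i j, ⁅F i, F j⁆ = 0)
    (hQQ : ∀ i j, ⁅Q i, Q j⁆ = 0) (hPP : ∀ i j, ⁅P i, P j⁆ = 0)
    (hJR : ∀ i j, ⁅J i j, R⁆ = 0) (hJE : ∀ i j, ⁅J i j, E⁆ = 0)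
    (hJT : ∀ i j, ⁅J i j, T⁆ = 0)
    (hGR : ∀ i, ⁅G i, R⁆ = 0) (hFR : ∀ i, ⁅F i, R⁆ = 0)
    (hQR : ∀ i, ⁅Q i, R⁆ = 0) (hPR : ∀ i, ⁅P i, R⁆ = 0)
    (hGT : ∀ i, ⁅G i, T⁆ = 0) (hFT : ∀ i, ⁅F i, T⁆ = 0)
    (hQT : ∀ i, ⁅Q i, T⁆ = 0) (hPT : ∀ i, ⁅P i, T⁆ = 0)
    (hRT : ⁅R, T⁆ = 0)
    (hEQ : ∀ i, ⁅E, Q i⁆ = 0) (hEP : ∀ i, ⁅E, P i⁆ = 0)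
    (hspan : Submodule.span k
      (Set.range (fun p : Fin N × Fin N => J p.1 p.2) ∪ Set.range G ∪ Set.range F
        ∪ Set.range Q ∪ Set.range P ∪ {R, E, T, L, A, M}) = ⊤) :
    (ι k T : UniversalEnvelopingAlgebra k g) ^ 2 + ι k R * ι k L - ι k A * ι k M
      ∈ Subalgebra.center k (UniversalEnvelopingAlgebra k g) := by
  set f : UniversalEnvelopingAlgebra k g :=
    (ι k T : UniversalEnvelopingAlgebra k g) ^ 2 + ι k R * ι k L - ι k A * ι k M with hf
  -- commutation from vanishing bracket
  have comm : ∀ x y : g, ⁅x, y⁆ = 0 →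
      Commute (ι k x : UniversalEnvelopingAlgebra k g) (ι k y) := by
    intro x y h
    have h2 : (ι k ⁅x, y⁆ : UniversalEnvelopingAlgebra k g) = ⁅(ι k x : _), ι k y⁆ :=
      LieHom.map_lie _ _ _
    rw [h, map_zero, Ring.lie_def] at h2
    exact (sub_eq_zero.mp h2.symm)
  -- elements commuting with T, R (and with L, A, M, which is automatic) commute with f
  have keyc : ∀ x : g, ⁅x, T⁆ = 0 → ⁅x, R⁆ = 0 →
      Commute (ι k x : UniversalEnvelopingAlgebra k g) f := by
    intro x h1 h2
    have ht := comm x T h1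
    have hr := comm x R h2
    have hl := comm x L (hLc x)
    have ha := comm x A (hAc x)
    have hm := comm x M (hMc x)
    exact ((ht.pow_right 2).add_right (hr.mul_right hl)).sub_right (ha.mul_right hm)
  -- E commutes with f
  have keyE : Commute (ι k E : UniversalEnvelopingAlgebra k g) f := by
    set e : UniversalEnvelopingAlgebra k g := ι k E
    set t : UniversalEnvelopingAlgebra k g := ι k T
    set r : UniversalEnvelopingAlgebra k g := ι k R
    set l : UniversalEnvelopingAlgebra k g := ι k L
    set a : UniversalEnvelopingAlgebra k g := ι k A
    set m : UniversalEnvelopingAlgebra k g := ι k M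
    have h0 : (ι k ⁅E, T⁆ : UniversalEnvelopingAlgebra k g) = ⁅e, t⁆ := LieHom.map_lie _ _ _
    rw [hET, map_neg, Ring.lie_def] at h0
    have het : e * t = t * e - l := by
      have h := h0.symm
      rw [sub_eq_iff_eq_add] at h
      rw [h, neg_add_eq_sub]
    have h1 : (ι k ⁅E, R⁆ : UniversalEnvelopingAlgebra k g) = ⁅e, r⁆ := LieHom.map_lie _ _ _
    rw [hER, map_smul, Ring.lie_def] at h1
    have her : e * r = r * e + (2 : k) • t := by
      have h := h1.symm
      rw [sub_eq_iff_eq_add] at h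
      rw [h, add_comm]
    have hel : e * l = l * e := comm E L (hLc E)
    have hea : e * a = a * e := comm E A (hAc E)
    have hem : e * m = m * e := comm E M (hMc E)
    have hlt : l * t = t * l := (comm T L (hLc T)).symm
    have hA : e * (t * t) = t * t * e - t * l - l * t := by
      calc e * (t * t) = (e * t) * t := by rw [mul_assoc]
        _ = (t * e - l) * t := by rw [het]
        _ = t * (e * t) - l * t := by rw [sub_mul, mul_assoc]
        _ = t * (t * e - l) - l * t := by rw [het]
        _ = t * t * e - t * l - l * t := by rw [mul_sub, ← mul_assoc]
    have hB : e * (r * l) = r * l * e + (2 : k) • (t * l) := by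
      calc e * (r * l) = (e * r) * l := by rw [mul_assoc]
        _ = r * (e * l) + (2 : k) • (t * l) := by rw [her, add_mul, mul_assoc, smul_mul_assoc]
        _ = r * l * e + (2 : k) • (t * l) := by rw [hel, ← mul_assoc]
    have hC : e * (a * m) = a * m * e := by
      rw [← mul_assoc, hea, mul_assoc, hem, ← mul_assoc]
    show e * f = f * e
    rw [hf, pow_two, mul_sub, mul_add, sub_mul, add_mul, hA, hB, hC, hlt, two_smul]
    abel
  -- every basis element commutes with f
  have key : ∀ x : g, Commute (ι k x : UniversalEnvelopingAlgebra k g) f := by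
    intro x
    have hx : x ∈ Submodule.span k
        (Set.range (fun p : Fin N × Fin N => J p.1 p.2) ∪ Set.range G ∪ Set.range F
          ∪ Set.range Q ∪ Set.range P ∪ {R, E, T, L, A, M}) := by
      rw [hspan]; trivial
    refine Submodule.span_induction (p := fun x _ => Commute (ι k x : _) f)
      ?_ ?_ ?_ ?_ hx
    · intro y hy
      simp only [Set.mem_union, Set.mem_range, Set.mem_insert_iff, Set.mem_singleton_iff,
        Prod.exists] at hy
      rcases hy with ((((⟨i, j, rfl⟩ | ⟨i, rfl⟩) | ⟨i, rfl⟩) | ⟨i, rfl⟩) | ⟨i, rfl⟩) |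
        (rfl | rfl | rfl | rfl | rfl | rfl)
      · exact keyc _ (hJT i j) (hJR i j)
      · exact keyc _ (hGT i) (hGR i)
      · exact keyc _ (hFT i) (hFR i)
      · exact keyc _ (hQT i) (hQR i)
      · exact keyc _ (hPT i) (hPR i)
      · exact keyc _ hRT (lie_self _)
      · exact keyE
      · exact keyc _ (lie_self _) (by rw [← neg_zero, ← hRT, ← lie_skew])
      · exact keyc _ (by rw [← neg_zero, ← hLc T, ← lie_skew])
          (by rw [← neg_zero, ← hLc R, ← lie_skew])
      · exact keyc _ (by rw [← neg_zero, ← hAc T, ← lie_skew])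
          (by rw [← neg_zero, ← hAc R, ← lie_skew])
      · exact keyc _ (by rw [← neg_zero, ← hMc T, ← lie_skew])
          (by rw [← neg_zero, ← hMc R, ← lie_skew])
    · have h0 : (ι k (0 : g) : UniversalEnvelopingAlgebra k g) = 0 := map_zero _
      show Commute (ι k (0:g) : UniversalEnvelopingAlgebra k g) f
      rw [h0]; exact Commute.zero_left f
    · intro x y _ _ hx hy
      have h0 : (ι k (x + y) : UniversalEnvelopingAlgebra k g) = ι k x + ι k y :=
        map_add _ _ _
      show Commute (ι k (x + y) : UniversalEnvelopingAlgebra k g) f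
      rw [h0]; exact hx.add_left hy
    · intro c x _ hx
      have h0 : (ι k (c • x) : UniversalEnvelopingAlgebra k g) = c • (ι k x : _) :=
        map_smul _ _ _
      show Commute (ι k (c • x) : UniversalEnvelopingAlgebra k g) f
      rw [h0]; exact hx.smul_left c
  -- conclude: everything in U(g) commutes with f
  rw [Subalgebra.mem_center_iff]
  intro b
  obtain ⟨x, rfl⟩ : ∃ x, mkAlgHom k g x = b := RingCon.mkₐ_surjective (α := k) (ringCon k g) b
  induction x using TensorAlgebra.induction with
  | algebraMap r =>
      rw [AlgHom.commutes]
      exact Algebra.commutes r f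
  | ι x =>
      have := key x
      simpa [UniversalEnvelopingAlgebra.ι_apply, mkAlgHom] using this.eq
  | mul x y hx hy =>
      rw [map_mul, mul_assoc, hy, ← mul_assoc, hx, mul_assoc]
  | add x y hx hy =>
      rw [map_add, add_mul, mul_add, hx, hy]
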